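/- Kleene star upper bound: let L be a suffix-free regular language over an alphabet Σ with NSC(L) = m. Then NSC(L*) ≤ m, i.e., there is an NFA with at most m states accepting the Kleene star L*. -/

import Mathlib

open Computability

/-- A nondeterministic finite automaton with a single start state and
no ε-transitions. -/
structure SNFA (α : Type) (σ : Type) where
  step : σ → α → Set σ
  start : σ
  accept : Set σ

namespace SNFA

variable {α σ : Type}

/-- The set of states reachable from some state in `S` by one transition on `a`. -/
def stepSet (M : SNFA α σ) (S : Set σ) (a : α) : Set σ :=
  ⋃ s ∈ S, M.step s a

/-- The set of states reachable from the set `S` of states by reading the word `w`. -/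
def evalFrom (M : SNFA α σ) (S : Set σ) (w : List α) : Set σ :=
  w.foldl M.stepSet S

/-- The language accepted by `M`: all words spelled out by a path
from the start state to an accepting state. -/
def accepts (M : SNFA α σ) : Language α :=
  {w | ∃ q ∈ M.accept, q ∈ M.evalFrom {M.start} w}

end SNFA

/-- A language is suffix-free if no word of the language is a proper suffix
of another word of the language. -/
def SuffixFree {α : Type} (L : Language α) : Prop :=
  ∀ u v : List α, u ∈ L → v ∈ L → u <:+ v → u = v

/-- `NSCle L k`: there is an NFA with at most `k` states accepting `L`
(so the nondeterministic state complexity of `L` is at most `k`). -/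
def NSCle {α : Type} (L : Language α) (k : ℕ) : Prop :=
  ∃ (σ : Type) (x : Fintype σ) (M : SNFA α σ), M.accepts = L ∧ @Fintype.card σ x ≤ k

/-- `NSCge L k`: every NFA accepting `L` has at least `k` states
(so the nondeterministic state complexity of `L` is at least `k`). -/
def NSCge {α : Type} (L : Language α) (k : ℕ) : Prop :=
  ∀ (σ : Type) [Fintype σ] (M : SNFA α σ), M.accepts = L → k ≤ Fintype.card σ

/-- `NSCeq L m`: the nondeterministic state complexity of `L` is exactly `m`:
some NFA with `m` states accepts `L` and every NFA accepting `L` has at least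
`m` states. -/
def NSCeq {α : Type} (L : Language α) (m : ℕ) : Prop :=
  NSCle L m ∧ NSCge L m

namespace SNFA

variable {α σ : Type}

lemma mem_stepSet_iff {M : SNFA α σ} {S : Set σ} {a : α} {q : σ} :
    q ∈ M.stepSet S a ↔ ∃ s ∈ S, q ∈ M.step s a := by
  simp [stepSet]

lemma evalFrom_nil' (M : SNFA α σ) (S : Set σ) : M.evalFrom S [] = S := rfl

lemma evalFrom_append' (M : SNFA α σ) (S : Set σ) (u v : List α) :
    M.evalFrom S (u ++ v) = M.evalFrom (M.evalFrom S u) v := by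
  simp [evalFrom, List.foldl_append]

lemma evalFrom_append_singleton' (M : SNFA α σ) (S : Set σ) (w : List α) (a : α) :
    M.evalFrom S (w ++ [a]) = M.stepSet (M.evalFrom S w) a := by
  simp [evalFrom, List.foldl_append]

lemma evalFrom_mono' {M N : SNFA α σ} (h : ∀ q a, M.step q a ⊆ N.step q a)
    {S T : Set σ} (hST : S ⊆ T) (w : List α) : M.evalFrom S w ⊆ N.evalFrom T w := by
  induction w generalizing S T with
  | nil => exact hST
  | cons a w ih =>
    apply ih
    intro q hq
    rw [mem_stepSet_iff] at hq ⊢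
    obtain ⟨s, hs, hqs⟩ := hq
    exact ⟨s, hST hs, h s a hqs⟩

/-- Prune all transitions into the start state. -/
def prune (M : SNFA α σ) : SNFA α σ :=
  ⟨fun q a => M.step q a \ {M.start}, M.start, M.accept⟩

lemma prune_nonreturning (M : SNFA α σ) (q : σ) (a : α) :
    M.start ∉ (M.prune).step q a := fun h => h.2 rfl

lemma nonreturning_eval {M : SNFA α σ} (hnr : ∀ q a, M.start ∉ M.step q a)
    {w : List α} (h : M.start ∈ M.evalFrom {M.start} w) : w = [] := by
  rcases List.eq_nil_or_concat w with rfl | ⟨w', a, rfl⟩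
  · rfl
  · rw [List.concat_eq_append, evalFrom_append_singleton', mem_stepSet_iff] at h
    obtain ⟨s, _, hs⟩ := h
    exact absurd hs (hnr s a)

lemma prune_evalFrom_suffix (M : SNFA α σ) (w : List α) (q : σ)
    (h : q ∈ M.evalFrom {M.start} w) :
    ∃ v, v <:+ w ∧ q ∈ (M.prune).evalFrom {M.start} v := by
  induction w using List.reverseRecOn generalizing q with
  | nil => exact ⟨[], List.nil_suffix, h⟩
  | append_singleton w a ih =>
    rw [evalFrom_append_singleton', mem_stepSet_iff] at h
    obtain ⟨p, hp, hq⟩ := h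
    by_cases hqs : q = M.start
    · exact ⟨[], List.nil_suffix, by simp [hqs, evalFrom, prune]⟩
    · obtain ⟨v, hv, hpv⟩ := ih p hp
      refine ⟨v ++ [a], ?_, ?_⟩
      · obtain ⟨t, rfl⟩ := hv
        exact ⟨t, (List.append_assoc _ _ _).symm⟩
      · rw [evalFrom_append_singleton', mem_stepSet_iff]
        exact ⟨p, hpv, hq, hqs⟩

lemma prune_accepts (M : SNFA α σ) (hsf : SuffixFree M.accepts) :
    (M.prune).accepts = M.accepts := by
  apply Set.Subset.antisymm
  · rintro w ⟨q, hq, he⟩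
    exact ⟨q, hq, evalFrom_mono' (fun q a => Set.diff_subset) subset_rfl w he⟩
  · rintro w ⟨q, hq, he⟩
    obtain ⟨v, hvw, hv⟩ := prune_evalFrom_suffix M w q he
    have hvL : v ∈ M.accepts := ⟨q, hq,
      evalFrom_mono' (fun q a => Set.diff_subset) subset_rfl v hv⟩
    have hwL : w ∈ M.accepts := ⟨q, hq, he⟩
    have : v = w := hsf v w hvL hwL hvw
    subst this
    exact ⟨q, hq, hv⟩

/-- The star construction: add restart transitions and make the start accepting. -/
def starNFA (M : SNFA α σ) : SNFA α σ :=
  ⟨fun q a => M.step q a ∪ {s | s = M.start ∧ ∃ f ∈ M.step q a, f ∈ M.accept},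
   M.start, M.accept ∪ {M.start}⟩

lemma step_subset_starNFA (M : SNFA α σ) (q : σ) (a : α) :
    M.step q a ⊆ (M.starNFA).step q a := Set.subset_union_left

lemma kstar_append' {L : Language α} {u v : List α} (hu : u ∈ L∗) (hv : v ∈ L) :
    u ++ v ∈ L∗ := by
  rw [Language.mem_kstar] at hu ⊢
  obtain ⟨T, rfl, hT⟩ := hu
  refine ⟨T ++ [v], by simp, ?_⟩
  intro y hy
  rw [List.mem_append, List.mem_singleton] at hy
  rcases hy with h | rfl
  · exact hT y h
  · exact hv

lemma star_evalFrom (M : SNFA α σ) (w : List α) (q : σ)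
    (h : q ∈ (M.starNFA).evalFrom {M.start} w) :
    ∃ u v, w = u ++ v ∧ u ∈ (M.accepts)∗ ∧ q ∈ M.evalFrom {M.start} v := by
  induction w using List.reverseRecOn generalizing q with
  | nil => exact ⟨[], [], rfl, Language.nil_mem_kstar _, h⟩
  | append_singleton w a ih =>
    rw [evalFrom_append_singleton', mem_stepSet_iff] at h
    obtain ⟨p, hp, hq⟩ := h
    obtain ⟨u, v, rfl, hu, hpv⟩ := ih p hp
    rcases hq with hq | ⟨rfl, f, hf, hfa⟩
    · refine ⟨u, v ++ [a], List.append_assoc _ _ _, hu, ?_⟩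
      rw [evalFrom_append_singleton', mem_stepSet_iff]
      exact ⟨p, hpv, hq⟩
    · have hvL : v ++ [a] ∈ M.accepts := by
        refine ⟨f, hfa, ?_⟩
        rw [evalFrom_append_singleton', mem_stepSet_iff]
        exact ⟨p, hpv, hf⟩
      exact ⟨(u ++ v) ++ [a], [], (List.append_nil _).symm,
        by rw [List.append_assoc]; exact kstar_append' hu hvL, Set.mem_singleton _⟩

lemma star_reach (M : SNFA α σ) (u : List α) (hu : u ∈ M.accepts) :
    M.start ∈ (M.starNFA).evalFrom {M.start} u := by
  rcases List.eq_nil_or_concat u with rfl | ⟨u', a, rfl⟩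
  · exact Set.mem_singleton _
  · obtain ⟨f, hfa, hfe⟩ := hu
    rw [List.concat_eq_append] at *
    rw [evalFrom_append_singleton', mem_stepSet_iff] at hfe ⊢
    obtain ⟨p, hp, hf⟩ := hfe
    refine ⟨p, evalFrom_mono' (step_subset_starNFA M) subset_rfl u' hp, ?_⟩
    exact Or.inr ⟨rfl, f, hf, hfa⟩

lemma star_reach_flatten (M : SNFA α σ) (S : List (List α)) (h : ∀ x ∈ S, x ∈ M.accepts) :
    M.start ∈ (M.starNFA).evalFrom {M.start} S.flatten := by
  induction S with
  | nil => exact Set.mem_singleton _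
  | cons x S ih =>
    rw [List.flatten_cons, evalFrom_append']
    refine evalFrom_mono' (fun q a => subset_rfl) ?_ S.flatten
      (ih fun y hy => h y (List.mem_cons_of_mem _ hy))
    exact Set.singleton_subset_iff.mpr (star_reach M x (h x List.mem_cons_self))

end SNFA

/-- **Kleene star, upper bound.** If `L` is a suffix-free regular language with
nondeterministic state complexity `m`, then some NFA with at most `m` states
accepts the Kleene star `L∗`. -/
theorem kstar_upper {α : Type} (L : Language α) (m : ℕ)
    (hsf : SuffixFree L) (hm : NSCeq L m) :
    NSCle (L∗) m := by
  obtain ⟨⟨σ, x, M, hM, hcard⟩, _⟩ := hm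
  have hP : (M.prune).accepts = L := by
    rw [SNFA.prune_accepts M (hM ▸ hsf), hM]
  refine ⟨σ, x, (M.prune).starNFA, ?_, hcard⟩
  ext w
  constructor
  · rintro ⟨q, hq, he⟩
    obtain ⟨u, v, rfl, hu, hv⟩ := SNFA.star_evalFrom (M.prune) _ q he
    rw [hP] at hu
    rcases hq with hq | rfl
    · exact SNFA.kstar_append' hu (hP ▸ ⟨q, hq, hv⟩)
    · have : v = [] := SNFA.nonreturning_eval M.prune_nonreturning hv
      subst this
      rw [List.append_nil]
      exact hu
  · intro hw
    rw [Language.mem_kstar] at hw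
    obtain ⟨S, rfl, hS⟩ := hw
    exact ⟨(M.prune).start, Or.inr rfl,
      SNFA.star_reach_flatten (M.prune) S fun y hy => hP ▸ hS y hy⟩
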